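/- For M(z) = z/(z+1) (i.e., a = c = d = 1, b = 0), Stirling's method equals St_M(z) = z²(1 - z² - z³)/(z+1)³; z = 0 is a superattracting fixed point (St_M(0) = 0, St_M'(0) = 0), and the points z = (-1 ± i√3)/2 are fixed points of St_M with multiplier 1. -/

import Mathlib

open Filter Topology

lemma aux_derivM_neg_one : deriv (fun z : ℂ => z / (z + 1)) (-1) = 0 := by
  apply deriv_zero_of_not_differentiableAt
  intro h
  have hc : ContinuousAt (fun z : ℂ => z / (z + 1) * (z + 1)) (-1) :=
    h.continuousAt.mul ((continuous_id.add continuous_const).continuousAt)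
  have h0 : (fun z : ℂ => z / (z + 1) * (z + 1)) (-1) = 0 := by norm_num
  have h1 : Tendsto (fun z : ℂ => z / (z + 1) * (z + 1)) (𝓝[≠] (-1 : ℂ)) (𝓝 0) := by
    rw [← h0]
    exact hc.tendsto.mono_left nhdsWithin_le_nhds
  have h2 : Tendsto (fun z : ℂ => z / (z + 1) * (z + 1)) (𝓝[≠] (-1 : ℂ)) (𝓝 (-1)) := by
    have he : ∀ᶠ z in 𝓝[≠] (-1 : ℂ), z = z / (z + 1) * (z + 1) := by
      filter_upwards [self_mem_nhdsWithin] with z hz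
      have hz1 : z + 1 ≠ 0 := fun hh => hz (eq_neg_of_add_eq_zero_left hh)
      rw [div_mul_cancel₀ _ hz1]
    exact Tendsto.congr' he (tendsto_id.mono_left nhdsWithin_le_nhds)
  exact absurd (tendsto_nhds_unique h1 h2) (by norm_num)

lemma aux_derivM (w : ℂ) (hw : w + 1 ≠ 0) :
    deriv (fun z : ℂ => z / (z + 1)) w = 1 / (w + 1) ^ 2 := by
  have h : HasDerivAt (fun z : ℂ => z / (z + 1))
      ((1 * (w + 1) - w * 1) / (w + 1) ^ 2) w :=
    (hasDerivAt_id w).div ((hasDerivAt_id w).add_const 1) hw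
  rw [h.deriv]
  field_simp
  ring

lemma aux_R (x : ℂ) (hx : x + 1 ≠ 0) :
    HasDerivAt (fun z : ℂ => z ^ 2 * (1 - z ^ 2 - z ^ 3) / (z + 1) ^ 3)
      (((2 * x * (1 - x ^ 2 - x ^ 3) + x ^ 2 * (-(2 * x) - 3 * x ^ 2)) * (x + 1) ^ 3
        - x ^ 2 * (1 - x ^ 2 - x ^ 3) * (3 * (x + 1) ^ 2)) / ((x + 1) ^ 3) ^ 2) x := by
  have h1 : HasDerivAt (fun z : ℂ => z ^ 2) (2 * x) x := by
    simpa using hasDerivAt_pow 2 x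
  have h2 : HasDerivAt (fun z : ℂ => 1 - z ^ 2 - z ^ 3) (-(2 * x) - 3 * x ^ 2) x := by
    have := ((hasDerivAt_const x (1 : ℂ)).fun_sub (hasDerivAt_pow 2 x)).fun_sub (hasDerivAt_pow 3 x)
    simpa [pow_succ] using this
  have hN := h1.mul h2
  have hD : HasDerivAt (fun z : ℂ => (z + 1) ^ 3) (3 * (x + 1) ^ 2) x := by
    have := ((hasDerivAt_id x).add_const (1 : ℂ)).fun_pow 3
    simpa using this
  exact hN.div hD (pow_ne_zero 3 hx)

/-- For `M z = z/(z+1)`, Stirling's method equals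
`St_M z = z²(1 - z² - z³)/(z+1)³`; `z = 0` is a superattracting fixed point,
and `z = (-1 ± i√3)/2` are fixed points of multiplier `1`. -/
theorem stirling_mobius_example :
    let M : ℂ → ℂ := fun z => z / (z + 1)
    let St : ℂ → ℂ := fun z => z - M z / deriv M (z - M z)
    let p : ℂ := (-1 + Complex.I * (Real.sqrt 3 : ℂ)) / 2
    let q : ℂ := (-1 - Complex.I * (Real.sqrt 3 : ℂ)) / 2
    (∀ z : ℂ, z + 1 ≠ 0 →
        St z = z ^ 2 * (1 - z ^ 2 - z ^ 3) / (z + 1) ^ 3) ∧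
      St 0 = 0 ∧ deriv St 0 = 0 ∧
      St p = p ∧ deriv St p = 1 ∧
      St q = q ∧ deriv St q = 1 := by
  intro M St p q
  have hpv : p = (-1 + Complex.I * (Real.sqrt 3 : ℂ)) / 2 := rfl
  have hqv : q = (-1 - Complex.I * (Real.sqrt 3 : ℂ)) / 2 := rfl
  have hs : ((Real.sqrt 3 : ℂ)) ^ 2 = 3 := by
    norm_cast
    exact_mod_cast Real.sq_sqrt (by norm_num : (0:ℝ) ≤ 3)
  have hspos : (0:ℝ) < Real.sqrt 3 := Real.sqrt_pos.mpr (by norm_num)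
  have hp2 : p ^ 2 + p + 1 = 0 := by
    rw [hpv]
    linear_combination ((Real.sqrt 3 : ℂ) ^ 2 / 4) * Complex.I_sq - (1/4) * hs
  have hq2 : q ^ 2 + q + 1 = 0 := by
    rw [hqv]
    linear_combination ((Real.sqrt 3 : ℂ) ^ 2 / 4) * Complex.I_sq - (1/4) * hs
  have hp1 : p + 1 ≠ 0 := by
    rw [hpv]
    intro h
    have h2 : Complex.I * (Real.sqrt 3 : ℂ) = -1 := by linear_combination 2 * h
    have h3 := congrArg Complex.im h2
    simp [Complex.mul_im] at h3
  have hq1 : q + 1 ≠ 0 := by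
    rw [hqv]
    intro h
    have h2 : Complex.I * (Real.sqrt 3 : ℂ) = 1 := by linear_combination -2 * h
    have h3 := congrArg Complex.im h2
    simp [Complex.mul_im] at h3
  have key : ∀ z : ℂ, z + 1 ≠ 0 →
      St z = z ^ 2 * (1 - z ^ 2 - z ^ 3) / (z + 1) ^ 3 := by
    intro z hz
    show z - z / (z + 1) / deriv (fun z : ℂ => z / (z + 1)) (z - z / (z + 1)) = _
    by_cases h : z ^ 2 + z + 1 = 0
    · have hwm : z - z / (z + 1) = -1 := by
        field_simp
        linear_combination h
      rw [hwm, aux_derivM_neg_one, div_zero, sub_zero,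
        eq_div_iff (pow_ne_zero 3 hz)]
      linear_combination (z + z ^ 2 + z ^ 3) * h
    · have hw1 : (z - z / (z + 1)) + 1 ≠ 0 := by
        intro hc
        apply h
        field_simp at hc
        linear_combination hc
      rw [aux_derivM _ hw1]
      have hwv : z - z / (z + 1) + 1 = (z ^ 2 + z + 1) / (z + 1) := by
        field_simp
        ring
      rw [hwv]
      field_simp
      ring
  have hderiv : ∀ x : ℂ, x + 1 ≠ 0 → deriv St x =
      ((2 * x * (1 - x ^ 2 - x ^ 3) + x ^ 2 * (-(2 * x) - 3 * x ^ 2)) * (x + 1) ^ 3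
        - x ^ 2 * (1 - x ^ 2 - x ^ 3) * (3 * (x + 1) ^ 2)) / ((x + 1) ^ 3) ^ 2 := by
    intro x hx
    have hopen : IsOpen {z : ℂ | z + 1 ≠ 0} :=
      isOpen_ne.preimage (continuous_id.add continuous_const)
    have hev : St =ᶠ[𝓝 x] fun z => z ^ 2 * (1 - z ^ 2 - z ^ 3) / (z + 1) ^ 3 := by
      filter_upwards [hopen.mem_nhds hx] with w hw using key w hw
    rw [hev.deriv_eq, (aux_R x hx).deriv]
  refine ⟨key, ?_, ?_, ?_, ?_, ?_, ?_⟩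
  · have := key 0 (by norm_num)
    simpa using this
  · rw [hderiv 0 (by norm_num)]
    norm_num
  · rw [key p hp1, div_eq_iff (pow_ne_zero 3 hp1)]
    linear_combination (-p - p ^ 2 - p ^ 3) * hp2
  · rw [hderiv p hp1, div_eq_one_iff_eq (pow_ne_zero 2 (pow_ne_zero 3 hp1))]
    linear_combination (-1 - 3*p - 8*p^2 - 13*p^3 - 9*p^4 - 2*p^5) * hp2
  · rw [key q hq1, div_eq_iff (pow_ne_zero 3 hq1)]
    linear_combination (-q - q ^ 2 - q ^ 3) * hq2
  · rw [hderiv q hq1, div_eq_one_iff_eq (pow_ne_zero 2 (pow_ne_zero 3 hq1))]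
    linear_combination (-1 - 3*q - 8*q^2 - 13*q^3 - 9*q^4 - 2*q^5) * hq2
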